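/- Let (X^n, Y^n) be jointly distributed random sequences with finite alphabets, and let S be a discrete random variable on a finite alphabet 𝒮, jointly distributed with (X^n, Y^n). Then |I(X^n→Y^n) − I(X^n→Y^n | S)| ≤ H(S) ≤ log|𝒮|. -/

import Mathlib

open Finset

noncomputable section

-- Probability of the event `E` under the pmf `p` on a finite sample space `Ω`.
open Classical in
def pr {Ω : Type*} [Fintype Ω] (p : Ω → ℝ) (E : Ω → Prop) : ℝ :=
  ∑ ω, if E ω then p ω else 0

-- Shannon entropy `H(U)` (pointwise form).
def entropy {Ω α : Type*} [Fintype Ω] (p : Ω → ℝ) (U : Ω → α) : ℝ :=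
  -∑ ω, p ω * Real.log (pr p (fun ω' => U ω' = U ω))

-- Conditional Shannon entropy `H(U | V)`.
def condEntropy {Ω α β : Type*} [Fintype Ω] (p : Ω → ℝ) (U : Ω → α) (V : Ω → β) : ℝ :=
  -∑ ω, p ω * Real.log
      (pr p (fun ω' => U ω' = U ω ∧ V ω' = V ω) / pr p (fun ω' => V ω' = V ω))

-- Mutual information `I(U ; V)`.
def mutualInfo {Ω α β : Type*} [Fintype Ω] (p : Ω → ℝ) (U : Ω → α) (V : Ω → β) : ℝ :=
  ∑ ω, p ω * Real.log
      (pr p (fun ω' => U ω' = U ω ∧ V ω' = V ω) /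
        (pr p (fun ω' => U ω' = U ω) * pr p (fun ω' => V ω' = V ω)))

-- Conditional mutual information `I(U ; V | W)`.
def condMutualInfo {Ω α β γ : Type*} [Fintype Ω] (p : Ω → ℝ)
    (U : Ω → α) (V : Ω → β) (W : Ω → γ) : ℝ :=
  ∑ ω, p ω * Real.log
      ((pr p (fun ω' => U ω' = U ω ∧ V ω' = V ω ∧ W ω' = W ω) *
          pr p (fun ω' => W ω' = W ω)) /
        (pr p (fun ω' => U ω' = U ω ∧ W ω' = W ω) *
          pr p (fun ω' => V ω' = V ω ∧ W ω' = W ω)))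

-- The prefix `(X_0, …, X_{i-1})` of a random sequence `X`.
def prefixSeq {Ω 𝒳 : Type*} (X : Ω → ℕ → 𝒳) (i : ℕ) : Ω → (Fin i → 𝒳) :=
  fun ω j => X ω (j : ℕ)

-- Directed information `I(X^n → Y^n) = ∑_{i=1}^n I(X^i ; Y_i | Y^{i-1})` (0-indexed).
def directedInfo {Ω 𝒳 𝒴 : Type*} [Fintype Ω] (p : Ω → ℝ)
    (X : Ω → ℕ → 𝒳) (Y : Ω → ℕ → 𝒴) (n : ℕ) : ℝ :=
  ∑ i ∈ Finset.range n,
    condMutualInfo p (prefixSeq X (i + 1)) (fun ω => Y ω i) (prefixSeq Y i)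

/-! ### Auxiliary lemmas about `pr` -/

section PR
variable {Ω : Type*} [Fintype Ω] {p : Ω → ℝ}

lemma pr_nonneg (hp0 : ∀ ω, 0 ≤ p ω) (E : Ω → Prop) : 0 ≤ pr p E := by
  unfold pr
  exact Finset.sum_nonneg fun ω _ => by split <;> simp [hp0 ω]

lemma pr_congr {E F : Ω → Prop} (h : ∀ ω, E ω ↔ F ω) : pr p E = pr p F := by
  classical
  unfold pr
  exact Finset.sum_congr rfl fun ω _ => by rw [if_congr (h ω) rfl rfl]

lemma pr_mono (hp0 : ∀ ω, 0 ≤ p ω) {E F : Ω → Prop} (h : ∀ ω, E ω → F ω) :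
    pr p E ≤ pr p F := by
  unfold pr
  refine Finset.sum_le_sum fun ω _ => ?_
  by_cases hE : E ω
  · rw [if_pos hE, if_pos (h ω hE)]
  · rw [if_neg hE]; split <;> simp [hp0 ω]

lemma pr_pos (hp0 : ∀ ω, 0 ≤ p ω) {E : Ω → Prop} {ω : Ω}
    (hω : 0 < p ω) (hE : E ω) : 0 < pr p E := by
  classical
  have h1 : p ω ≤ pr p E := by
    unfold pr
    calc p ω = if E ω then p ω else 0 := (if_pos hE).symm
      _ ≤ ∑ ω', if E ω' then p ω' else 0 :=
        Finset.single_le_sum (f := fun ω' => if E ω' then p ω' else 0)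
          (fun i _ => by split <;> simp [hp0 i]) (Finset.mem_univ ω)
  linarith

lemma sum_mul_comp {κ : Type*} [Fintype κ] (f : Ω → κ) (F : κ → ℝ) :
    ∑ ω, p ω * F (f ω) = ∑ t, pr p (fun ω => f ω = t) * F t := by
  classical
  unfold pr
  have : ∀ t, (∑ ω, if f ω = t then p ω else 0) * F t
      = ∑ ω, if f ω = t then p ω * F t else 0 := by
    intro t
    rw [Finset.sum_mul]
    exact Finset.sum_congr rfl fun ω _ => by split <;> simp
  rw [Finset.sum_congr rfl fun t _ => this t, Finset.sum_comm]
  exact Finset.sum_congr rfl fun ω _ => by simp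

lemma sum_pr_fiber {κ : Type*} [Fintype κ] (hp1 : ∑ ω, p ω = 1) (f : Ω → κ) :
    ∑ t, pr p (fun ω => f ω = t) = 1 := by
  have := sum_mul_comp (p := p) f (fun _ => 1)
  simpa [hp1] using this.symm

lemma pr_marginal {α γ : Type*} [Fintype α] (U : Ω → α) (W : Ω → γ) (w : γ) :
    ∑ u, pr p (fun ω => U ω = u ∧ W ω = w) = pr p (fun ω => W ω = w) := by
  classical
  unfold pr
  rw [Finset.sum_comm]
  refine Finset.sum_congr rfl fun ω _ => ?_
  by_cases hW : W ω = w
  · simp [hW]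
  · simp [hW]

/-- Key pointwise log inequality used in the nonnegativity of conditional
mutual information. -/
lemma key_ineq {a b c d : ℝ} (ha : 0 ≤ a) (hab : a ≤ b) (hac : a ≤ c) (hcd : c ≤ d)
    (hb : 0 ≤ b) :
    a * -Real.log (a * d / (b * c)) ≤ b * c / d - a := by
  rcases ha.eq_or_lt with h0 | h0
  · rw [← h0]
    simp only [zero_mul, neg_zero, sub_zero]
    have hc : 0 ≤ c := le_trans h0.le hac
    exact div_nonneg (mul_nonneg hb hc) (le_trans hc hcd)
  · have hbpos : 0 < b := lt_of_lt_of_le h0 hab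
    have hcpos : 0 < c := lt_of_lt_of_le h0 hac
    have hdpos : 0 < d := lt_of_lt_of_le hcpos hcd
    have hx : (0:ℝ) < b * c / (a * d) := by positivity
    have hlog : Real.log (b * c / (a * d)) ≤ b * c / (a * d) - 1 :=
      Real.log_le_sub_one_of_pos hx
    have hneg : -Real.log (a * d / (b * c)) = Real.log (b * c / (a * d)) := by
      rw [← Real.log_inv]
      congr 1
      field_simp
    rw [hneg]
    calc a * Real.log (b * c / (a * d)) ≤ a * (b * c / (a * d) - 1) :=
          mul_le_mul_of_nonneg_left hlog ha
      _ = b * c / d - a := by field_simp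

end PR

/-! ### Nonnegativity of conditional mutual information -/

lemma condMutualInfo_nonneg {Ω α β γ : Type*} [Fintype Ω] [Fintype α] [Fintype β] [Fintype γ]
    {p : Ω → ℝ} (hp0 : ∀ ω, 0 ≤ p ω) (hp1 : ∑ ω, p ω = 1)
    (U : Ω → α) (V : Ω → β) (W : Ω → γ) :
    0 ≤ condMutualInfo p U V W := by
  classical
  set q3 : α × β × γ → ℝ := fun t => pr p (fun ω => U ω = t.1 ∧ V ω = t.2.1 ∧ W ω = t.2.2)
    with hq3
  set qUW : α × γ → ℝ := fun s => pr p (fun ω => U ω = s.1 ∧ W ω = s.2) with hqUW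
  set qVW : β × γ → ℝ := fun s => pr p (fun ω => V ω = s.1 ∧ W ω = s.2) with hqVW
  set qW : γ → ℝ := fun w => pr p (fun ω => W ω = w) with hqW
  set G : α × β × γ → ℝ := fun t =>
    Real.log (q3 t * qW t.2.2 / (qUW (t.1, t.2.2) * qVW (t.2.1, t.2.2))) with hG
  have hrw : condMutualInfo p U V W = ∑ t, q3 t * G t := by
    have h1 : condMutualInfo p U V W = ∑ ω, p ω * G (U ω, V ω, W ω) := rfl
    rw [h1, sum_mul_comp (f := fun ω => (U ω, V ω, W ω)) (F := G)]
    refine Finset.sum_congr rfl fun t _ => ?_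
    congr 1
    exact pr_congr fun ω => by simp [Prod.ext_iff]
  rw [hrw]
  rw [← neg_nonpos, ← Finset.sum_neg_distrib]
  have key : ∀ t : α × β × γ,
      -(q3 t * G t) ≤ qUW (t.1, t.2.2) * qVW (t.2.1, t.2.2) / qW t.2.2 - q3 t := by
    rintro ⟨u, v, w⟩
    have ha : 0 ≤ q3 (u, v, w) := pr_nonneg hp0 _
    have hab : q3 (u, v, w) ≤ qUW (u, w) := pr_mono hp0 fun ω h => ⟨h.1, h.2.2⟩
    have hac : q3 (u, v, w) ≤ qVW (v, w) := pr_mono hp0 fun ω h => ⟨h.2.1, h.2.2⟩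
    have hcd : qVW (v, w) ≤ qW w := pr_mono hp0 fun ω h => h.2
    have hb : 0 ≤ qUW (u, w) := pr_nonneg hp0 _
    have := key_ineq ha hab hac hcd hb
    simpa [hG, neg_mul, mul_neg] using this
  calc ∑ t : α × β × γ, -(q3 t * G t)
      ≤ ∑ t : α × β × γ, (qUW (t.1, t.2.2) * qVW (t.2.1, t.2.2) / qW t.2.2 - q3 t) :=
        Finset.sum_le_sum fun t _ => key t
    _ = (∑ t : α × β × γ, qUW (t.1, t.2.2) * qVW (t.2.1, t.2.2) / qW t.2.2) - 1 := by
        have hq3sum : ∑ t : α × β × γ, q3 t = 1 := by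
          rw [← sum_pr_fiber hp1 (fun ω => (U ω, V ω, W ω))]
          exact Finset.sum_congr rfl fun t _ => pr_congr fun ω => by simp [Prod.ext_iff]
        rw [Finset.sum_sub_distrib, hq3sum]
    _ ≤ 1 - 1 := by
        have h1 : ∑ t : α × β × γ, qUW (t.1, t.2.2) * qVW (t.2.1, t.2.2) / qW t.2.2
            = ∑ u : α, ∑ v : β, ∑ w : γ, qUW (u, w) * qVW (v, w) / qW w := by
          rw [Fintype.sum_prod_type]
          refine Finset.sum_congr rfl fun u _ => ?_
          rw [Fintype.sum_prod_type]
        have h2 : ∑ u : α, ∑ v : β, ∑ w : γ, qUW (u, w) * qVW (v, w) / qW w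
            = ∑ w : γ, ∑ u : α, ∑ v : β, qUW (u, w) * qVW (v, w) / qW w := by
          rw [Finset.sum_congr rfl fun (u : α) _ => Finset.sum_comm]
          exact Finset.sum_comm
        have h3 : ∀ w : γ, ∑ u : α, ∑ v : β, qUW (u, w) * qVW (v, w) / qW w
            = qW w * qW w / qW w := by
          intro w
          have : ∑ u : α, ∑ v : β, qUW (u, w) * qVW (v, w) / qW w
              = (∑ u : α, qUW (u, w)) * (∑ v : β, qVW (v, w)) / qW w := by
            rw [Finset.sum_mul_sum, Finset.sum_div]
            exact Finset.sum_congr rfl fun u _ => (Finset.sum_div _ _ _).symm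
          rw [this]
          congr 1
          · congr 1
            · simp only [hqUW, hqW]; exact pr_marginal U W w
            · simp only [hqVW, hqW]; exact pr_marginal V W w
        have h4 : ∑ w : γ, qW w * qW w / qW w ≤ 1 := by
          have : ∑ w : γ, qW w * qW w / qW w ≤ ∑ w : γ, qW w := by
            refine Finset.sum_le_sum fun w _ => ?_
            rcases eq_or_ne (qW w) 0 with h | h
            · simp [h]
            · rw [mul_div_assoc, div_self h, mul_one]
          refine this.trans ?_
          simp only [hqW]
          rw [sum_pr_fiber hp1 W]
        have : ∑ t : α × β × γ, qUW (t.1, t.2.2) * qVW (t.2.1, t.2.2) / qW t.2.2 ≤ 1 := by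
          rw [h1, h2, Finset.sum_congr rfl fun w _ => h3 w]
          exact h4
        linarith
    _ = 0 := by ring

/-! ### Entropy lemmas -/

section Entropy
variable {Ω : Type*} [Fintype Ω] {p : Ω → ℝ}

lemma condEntropy_nonneg {α β : Type*} (hp0 : ∀ ω, 0 ≤ p ω) (U : Ω → α) (V : Ω → β) :
    0 ≤ condEntropy p U V := by
  rw [condEntropy, neg_nonneg]
  refine Finset.sum_nonpos fun ω _ => ?_
  rcases (hp0 ω).eq_or_lt with h0 | h0
  · rw [← h0, zero_mul]
  · have h1 : 0 < pr p (fun ω' => U ω' = U ω ∧ V ω' = V ω) := pr_pos hp0 h0 ⟨rfl, rfl⟩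
    have h2 : pr p (fun ω' => U ω' = U ω ∧ V ω' = V ω) ≤ pr p (fun ω' => V ω' = V ω) :=
      pr_mono hp0 fun ω' h => h.2
    have : Real.log (pr p (fun ω' => U ω' = U ω ∧ V ω' = V ω)
        / pr p (fun ω' => V ω' = V ω)) ≤ 0 := by
      refine Real.log_nonpos (le_of_lt (div_pos h1 (lt_of_lt_of_le h1 h2))) ?_
      rw [div_le_one (lt_of_lt_of_le h1 h2)]
      exact h2
    exact mul_nonpos_of_nonneg_of_nonpos h0.le this

lemma condEntropy_congr {α β β' : Type*} (U : Ω → α) {W : Ω → β} {W' : Ω → β'}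
    (h : ∀ ω ω', W ω' = W ω ↔ W' ω' = W' ω) :
    condEntropy p U W = condEntropy p U W' := by
  rw [condEntropy, condEntropy]
  congr 1
  refine Finset.sum_congr rfl fun ω _ => ?_
  have e1 : pr p (fun ω' => U ω' = U ω ∧ W ω' = W ω)
      = pr p (fun ω' => U ω' = U ω ∧ W' ω' = W' ω) := pr_congr fun ω' => by rw [h ω ω']
  have e2 : pr p (fun ω' => W ω' = W ω) = pr p (fun ω' => W' ω' = W' ω) :=
    pr_congr fun ω' => h ω ω'
  rw [e1, e2]

lemma condMutualInfo_eq {α β γ : Type*} (hp0 : ∀ ω, 0 ≤ p ω)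
    (U : Ω → α) (V : Ω → β) (W : Ω → γ) :
    condMutualInfo p U V W
      = condEntropy p V W - condEntropy p V (fun ω => (U ω, W ω)) := by
  rw [condMutualInfo, condEntropy, condEntropy, neg_sub_neg, ← Finset.sum_sub_distrib]
  refine Finset.sum_congr rfl fun ω _ => ?_
  rcases (hp0 ω).eq_or_lt with h0 | h0
  · rw [← h0]; ring
  · have e1 : pr p (fun ω' => V ω' = V ω ∧ (U ω', W ω') = (U ω, W ω))
        = pr p (fun ω' => U ω' = U ω ∧ V ω' = V ω ∧ W ω' = W ω) :=
      pr_congr fun ω' => by simp [Prod.ext_iff]; tauto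
    have e2 : pr p (fun ω' => (U ω', W ω') = (U ω, W ω))
        = pr p (fun ω' => U ω' = U ω ∧ W ω' = W ω) :=
      pr_congr fun ω' => by simp [Prod.ext_iff]
    rw [e1, e2]
    have hUVW : 0 < pr p (fun ω' => U ω' = U ω ∧ V ω' = V ω ∧ W ω' = W ω) :=
      pr_pos hp0 h0 ⟨rfl, rfl, rfl⟩
    have hW : 0 < pr p (fun ω' => W ω' = W ω) := pr_pos hp0 h0 rfl
    have hUW : 0 < pr p (fun ω' => U ω' = U ω ∧ W ω' = W ω) := pr_pos hp0 h0 ⟨rfl, rfl⟩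
    have hVW : 0 < pr p (fun ω' => V ω' = V ω ∧ W ω' = W ω) := pr_pos hp0 h0 ⟨rfl, rfl⟩
    rw [Real.log_div (by positivity) (by positivity),
      Real.log_mul (ne_of_gt hUVW) (ne_of_gt hW),
      Real.log_mul (ne_of_gt hUW) (ne_of_gt hVW),
      Real.log_div (ne_of_gt hUVW) (ne_of_gt hUW),
      Real.log_div (ne_of_gt hVW) (ne_of_gt hW)]
    ring

lemma condMutualInfo_comm {α β γ : Type*} (U : Ω → α) (V : Ω → β) (W : Ω → γ) :
    condMutualInfo p U V W = condMutualInfo p V U W := by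
  rw [condMutualInfo, condMutualInfo]
  refine Finset.sum_congr rfl fun ω _ => ?_
  rw [pr_congr (E := fun ω' => U ω' = U ω ∧ V ω' = V ω ∧ W ω' = W ω)
      (F := fun ω' => V ω' = V ω ∧ U ω' = U ω ∧ W ω' = W ω) (fun ω' => by tauto),
    mul_comm (pr p fun ω' => V ω' = V ω ∧ W ω' = W ω)]

lemma condEntropy_anti {α β β' : Type*} [Fintype α] [Fintype β] [Fintype β']
    (hp0 : ∀ ω, 0 ≤ p ω) (hp1 : ∑ ω, p ω = 1)
    (U : Ω → α) {W : Ω → β} {W' : Ω → β'}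
    (h : ∀ ω ω', W' ω' = W' ω → W ω' = W ω) :
    condEntropy p U W' ≤ condEntropy p U W := by
  have h1 : 0 ≤ condMutualInfo p W' U W := condMutualInfo_nonneg hp0 hp1 W' U W
  have h2 : condMutualInfo p W' U W
      = condEntropy p U W - condEntropy p U (fun ω => (W' ω, W ω)) :=
    condMutualInfo_eq hp0 W' U W
  have h3 : condEntropy p U (fun ω => (W' ω, W ω)) = condEntropy p U W' :=
    condEntropy_congr U fun ω ω' => by
      constructor
      · rintro h'; rw [Prod.ext_iff] at h'; exact h'.1
      · intro h'; rw [Prod.ext_iff]; exact ⟨h', h ω ω' h'⟩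
  linarith

lemma entropy_eq_condEntropy_unit (hp1 : ∑ ω, p ω = 1) {α : Type*} (U : Ω → α) :
    entropy p U = condEntropy p U (fun _ : Ω => ()) := by
  rw [entropy, condEntropy]
  congr 1
  refine Finset.sum_congr rfl fun ω _ => ?_
  have e1 : pr p (fun ω' => U ω' = U ω ∧ (fun _ : Ω => ()) ω' = (fun _ : Ω => ()) ω)
      = pr p (fun ω' => U ω' = U ω) := pr_congr fun ω' => by simp
  have e2 : pr p (fun ω' => (fun _ : Ω => ()) ω' = (fun _ : Ω => ()) ω) = 1 := by
    rw [pr_congr (F := fun _ => True) (fun ω' => by simp)]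
    unfold pr
    simp [hp1]
  rw [e1, e2, div_one]

lemma condEntropy_le_entropy {α β : Type*} [Fintype α] [Fintype β]
    (hp0 : ∀ ω, 0 ≤ p ω) (hp1 : ∑ ω, p ω = 1) (U : Ω → α) (W : Ω → β) :
    condEntropy p U W ≤ entropy p U := by
  rw [entropy_eq_condEntropy_unit hp1]
  exact condEntropy_anti hp0 hp1 U fun ω ω' _ => rfl

lemma entropy_le_log_card {α : Type*} [Fintype α]
    (hp0 : ∀ ω, 0 ≤ p ω) (hp1 : ∑ ω, p ω = 1) (U : Ω → α) :
    entropy p U ≤ Real.log (Fintype.card α) := by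
  classical
  have hΩ : Nonempty Ω := by
    by_contra h
    rw [not_nonempty_iff] at h
    haveI := h
    rw [Finset.univ_eq_empty, Finset.sum_empty] at hp1
    exact one_ne_zero hp1.symm
  have hα : Nonempty α := ⟨U (Classical.arbitrary Ω)⟩
  have hN : (0:ℝ) < (Fintype.card α : ℝ) := by
    exact_mod_cast Fintype.card_pos
  set N : ℝ := (Fintype.card α : ℝ) with hNdef
  set q : α → ℝ := fun a => pr p (fun ω => U ω = a) with hq
  have hE : entropy p U = -∑ a, q a * Real.log (q a) := by
    rw [entropy]
    congr 1
    exact sum_mul_comp (f := U) (F := fun a => Real.log (pr p (fun ω => U ω = a)))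
  have key : ∀ a : α, -(q a * Real.log (q a)) - q a * Real.log N ≤ 1/N - q a := by
    intro a
    rcases (show (0:ℝ) ≤ q a from pr_nonneg hp0 (fun ω => U ω = a)).eq_or_lt with h0 | h0
    · rw [← h0]
      simp only [zero_mul, neg_zero, sub_zero, sub_zero]
      positivity
    · have hlog : Real.log (1/(q a * N)) ≤ 1/(q a * N) - 1 :=
        Real.log_le_sub_one_of_pos (by positivity)
      have hlogeq : -(Real.log (q a)) - Real.log N = Real.log (1/(q a * N)) := by
        rw [one_div, Real.log_inv, Real.log_mul (ne_of_gt h0) (ne_of_gt hN)]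
        ring
      calc -(q a * Real.log (q a)) - q a * Real.log N
          = q a * (Real.log (1/(q a * N))) := by rw [← hlogeq]; ring
        _ ≤ q a * (1/(q a * N) - 1) := mul_le_mul_of_nonneg_left hlog h0.le
        _ = 1/N - q a := by field_simp
  have hsum : ∑ a, q a = 1 := sum_pr_fiber hp1 U
  have hdiff : entropy p U - Real.log N
      = ∑ a, (-(q a * Real.log (q a)) - q a * Real.log N) := by
    rw [Finset.sum_sub_distrib, Finset.sum_neg_distrib, ← Finset.sum_mul, hsum, one_mul, hE]
  have hbound : ∑ a, (-(q a * Real.log (q a)) - q a * Real.log N) ≤ 0 := by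
    calc ∑ a, (-(q a * Real.log (q a)) - q a * Real.log N)
        ≤ ∑ a : α, (1/N - q a) := Finset.sum_le_sum fun a _ => key a
      _ = (Fintype.card α : ℝ) * (1/N) - 1 := by
          rw [Finset.sum_sub_distrib, hsum, Finset.sum_const, Finset.card_univ, nsmul_eq_mul]
      _ = 0 := by
          rw [← hNdef]
          field_simp
          norm_num
  linarith

end Entropy

/-! ### The key per-step identity -/

lemma cmi_diff {Ω α β γ δ : Type*} [Fintype Ω] {p : Ω → ℝ} (hp0 : ∀ ω, 0 ≤ p ω)
    (U : Ω → α) (V : Ω → β) (W : Ω → γ) (S : Ω → δ) :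
    condMutualInfo p U V W - condMutualInfo p U V (fun ω => (W ω, S ω))
      = condMutualInfo p S V W - condMutualInfo p S V (fun ω => (U ω, W ω)) := by
  have e1 : condMutualInfo p U V W
      = condEntropy p V W - condEntropy p V (fun ω => (U ω, W ω)) :=
    condMutualInfo_eq hp0 U V W
  have e2 : condMutualInfo p U V (fun ω => (W ω, S ω))
      = condEntropy p V (fun ω => (W ω, S ω))
        - condEntropy p V (fun ω => (U ω, (W ω, S ω))) :=
    condMutualInfo_eq hp0 U V _
  have e3 : condMutualInfo p S V W
      = condEntropy p V W - condEntropy p V (fun ω => (S ω, W ω)) :=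
    condMutualInfo_eq hp0 S V W
  have e4 : condMutualInfo p S V (fun ω => (U ω, W ω))
      = condEntropy p V (fun ω => (U ω, W ω))
        - condEntropy p V (fun ω => (S ω, (U ω, W ω))) :=
    condMutualInfo_eq hp0 S V _
  have c1 : condEntropy p V (fun ω => (S ω, W ω)) = condEntropy p V (fun ω => (W ω, S ω)) :=
    condEntropy_congr V fun ω ω' => by simp only [Prod.mk.injEq]; tauto
  have c2 : condEntropy p V (fun ω => (S ω, (U ω, W ω)))
      = condEntropy p V (fun ω => (U ω, (W ω, S ω))) :=
    condEntropy_congr V fun ω ω' => by simp only [Prod.mk.injEq]; tauto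
  linarith

/-! ### Prefix lemmas -/

lemma prefixSeq_succ_iff {Ω 𝒴 : Type*} (Y : Ω → ℕ → 𝒴) (i : ℕ) (ω ω' : Ω) :
    prefixSeq Y (i+1) ω' = prefixSeq Y (i+1) ω ↔
      Y ω' i = Y ω i ∧ prefixSeq Y i ω' = prefixSeq Y i ω := by
  constructor
  · intro h
    refine ⟨congrFun h ⟨i, Nat.lt_succ_self i⟩, funext fun j => ?_⟩
    exact congrFun h ⟨j, Nat.lt_succ_of_lt j.isLt⟩
  · rintro ⟨h1, h2⟩
    funext j
    rcases Nat.lt_succ_iff_lt_or_eq.mp j.isLt with hj | hj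
    · exact congrFun h2 ⟨j, hj⟩
    · show Y ω' (j : ℕ) = Y ω (j : ℕ)
      rw [hj]
      exact h1

lemma prefixSeq_zero_eq {Ω 𝒴 : Type*} (Y : Ω → ℕ → 𝒴) (ω ω' : Ω) :
    prefixSeq Y 0 ω' = prefixSeq Y 0 ω :=
  funext fun j => Fin.elim0 j

/-! ### Main theorem -/

/-- `|I(X^n→Y^n) − I(X^n→Y^n | S)| ≤ H(S) ≤ log|𝒮|`,
where `I(X^n→Y^n | S) = Σ_{i=1}^n I(X^i; Y_i | Y^{i-1}, S)`. -/
theorem abs_directedInfo_sub_condDirectedInfo_le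
    {Ω 𝒳 𝒴 𝒮 : Type*} [Fintype Ω] [Fintype 𝒳] [Fintype 𝒴] [Fintype 𝒮]
    (p : Ω → ℝ) (hp0 : ∀ ω, 0 ≤ p ω) (hp1 : ∑ ω, p ω = 1)
    (X : Ω → ℕ → 𝒳) (Y : Ω → ℕ → 𝒴) (S : Ω → 𝒮) (n : ℕ) :
    |directedInfo p X Y n -
        ∑ i ∈ Finset.range n,
          condMutualInfo p (prefixSeq X (i + 1)) (fun ω => Y ω i)
            (fun ω => (prefixSeq Y i ω, S ω))| ≤ entropy p S ∧
      entropy p S ≤ Real.log (Fintype.card 𝒮) := by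
  constructor
  · -- abbreviations
    set A : ℕ → ℝ := fun i => condMutualInfo p S (fun ω => Y ω i) (prefixSeq Y i) with hA
    set B : ℕ → ℝ := fun i => condMutualInfo p S (fun ω => Y ω i)
      (fun ω => (prefixSeq X (i+1) ω, prefixSeq Y i ω)) with hB
    set g : ℕ → ℝ := fun i => condEntropy p S (prefixSeq Y i) with hg
    set h' : ℕ → ℝ := fun i =>
      condEntropy p S (fun ω => (prefixSeq X (i+1) ω, prefixSeq Y i ω)) with hh'
    -- Step 1: the difference is ∑ (A i - B i)
    have hD : directedInfo p X Y n -
        (∑ i ∈ Finset.range n,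
          condMutualInfo p (prefixSeq X (i + 1)) (fun ω => Y ω i)
            (fun ω => (prefixSeq Y i ω, S ω)))
        = (∑ i ∈ Finset.range n, A i) - (∑ i ∈ Finset.range n, B i) := by
      rw [directedInfo, ← Finset.sum_sub_distrib, ← Finset.sum_sub_distrib]
      refine Finset.sum_congr rfl fun i _ => ?_
      exact cmi_diff hp0 (prefixSeq X (i+1)) (fun ω => Y ω i) (prefixSeq Y i) S
    -- Step 2: A i = g i - g (i+1)
    have hAi : ∀ i, A i = g i - g (i+1) := by
      intro i
      have c1 : condMutualInfo p S (fun ω => Y ω i) (prefixSeq Y i)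
          = condMutualInfo p (fun ω => Y ω i) S (prefixSeq Y i) :=
        condMutualInfo_comm S (fun ω => Y ω i) (prefixSeq Y i)
      have c2 : condMutualInfo p (fun ω => Y ω i) S (prefixSeq Y i)
          = condEntropy p S (prefixSeq Y i)
            - condEntropy p S (fun ω => (Y ω i, prefixSeq Y i ω)) :=
        condMutualInfo_eq hp0 (fun ω => Y ω i) S (prefixSeq Y i)
      have c3 : condEntropy p S (fun ω => (Y ω i, prefixSeq Y i ω))
          = condEntropy p S (prefixSeq Y (i+1)) :=
        condEntropy_congr S fun ω ω' => by
          rw [prefixSeq_succ_iff, Prod.ext_iff]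
      simp only [hA, hg]
      rw [c1, c2, c3]
    -- Step 3: B i ≤ h' i - h' (i+1)
    have hBi : ∀ i, B i ≤ h' i - h' (i+1) := by
      intro i
      have c1 : condMutualInfo p S (fun ω => Y ω i)
            (fun ω => (prefixSeq X (i+1) ω, prefixSeq Y i ω))
          = condMutualInfo p (fun ω => Y ω i) S
            (fun ω => (prefixSeq X (i+1) ω, prefixSeq Y i ω)) :=
        condMutualInfo_comm S (fun ω => Y ω i) _
      have c2 : condMutualInfo p (fun ω => Y ω i) S
            (fun ω => (prefixSeq X (i+1) ω, prefixSeq Y i ω))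
          = condEntropy p S (fun ω => (prefixSeq X (i+1) ω, prefixSeq Y i ω))
            - condEntropy p S
                (fun ω => (Y ω i, (prefixSeq X (i+1) ω, prefixSeq Y i ω))) :=
        condMutualInfo_eq hp0 (fun ω => Y ω i) S _
      have c3 : condEntropy p S (fun ω => (prefixSeq X (i+2) ω, prefixSeq Y (i+1) ω))
          ≤ condEntropy p S (fun ω => (Y ω i, (prefixSeq X (i+1) ω, prefixSeq Y i ω))) := by
        refine condEntropy_anti hp0 hp1 S fun ω ω' h => ?_
        rw [Prod.ext_iff] at h
        obtain ⟨hX, hY⟩ := h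
        rw [prefixSeq_succ_iff] at hX hY
        rw [Prod.ext_iff, Prod.ext_iff]
        exact ⟨hY.1, hX.2, hY.2⟩
      simp only [hB, hh']
      rw [c1, c2]
      have : (i + 1) + 1 = i + 2 := rfl
      linarith [c3]
    -- telescoping sums
    have hsumA : ∑ i ∈ Finset.range n, A i = g 0 - g n := by
      rw [Finset.sum_congr rfl fun i _ => hAi i]
      exact Finset.sum_range_sub' g n
    have hsumB : ∑ i ∈ Finset.range n, B i ≤ h' 0 - h' n := by
      calc ∑ i ∈ Finset.range n, B i ≤ ∑ i ∈ Finset.range n, (h' i - h' (i+1)) :=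
            Finset.sum_le_sum fun i _ => hBi i
        _ = h' 0 - h' n := Finset.sum_range_sub' h' n
    have hg0 : g 0 = entropy p S := by
      simp only [hg]
      rw [entropy_eq_condEntropy_unit hp1]
      exact condEntropy_congr S fun ω ω' =>
        ⟨fun _ => rfl, fun _ => prefixSeq_zero_eq Y ω ω'⟩
    have hgn : 0 ≤ g n := condEntropy_nonneg hp0 S (prefixSeq Y n)
    have hh'n : 0 ≤ h' n := condEntropy_nonneg hp0 S _
    have hh'0 : h' 0 ≤ entropy p S := condEntropy_le_entropy hp0 hp1 S _
    have hAnonneg : 0 ≤ ∑ i ∈ Finset.range n, A i :=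
      Finset.sum_nonneg fun i _ =>
        condMutualInfo_nonneg hp0 hp1 S (fun ω => Y ω i) (prefixSeq Y i)
    have hBnonneg : 0 ≤ ∑ i ∈ Finset.range n, B i :=
      Finset.sum_nonneg fun i _ =>
        condMutualInfo_nonneg hp0 hp1 S (fun ω => Y ω i) _
    have hAle : ∑ i ∈ Finset.range n, A i ≤ entropy p S := by
      rw [hsumA, hg0]
      linarith
    have hBle : ∑ i ∈ Finset.range n, B i ≤ entropy p S := by
      calc ∑ i ∈ Finset.range n, B i ≤ h' 0 - h' n := hsumB
        _ ≤ entropy p S := by linarith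
    rw [hD, abs_sub_le_iff]
    constructor <;> linarith
  · exact entropy_le_log_card hp0 hp1 S
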